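/- For every finite synchronisation tree t and any process p in any transition system, t ≲^B p if and only if t ≲_ω p. More generally, if T is a synchronisation tree of height < λ, then T ≲^B p iff T ≲_λ p. -/

import Mathlib

universe u v

/-- A labelled transition system with a divergence predicate. -/
structure LTS (Proc : Type v) (Act : Type u) where
  trans : Proc → Act → Proc → Prop
  div : Proc → Prop

namespace LTS

variable {Proc : Type v} {Act : Type u}

def conv (T : LTS Proc Act) (p : Proc) : Prop := ¬ T.div p

def Prebisim (T : LTS Proc Act) (R : Proc → Proc → Prop) : Prop :=
  ∀ p q, R p q →
    (∀ a p', T.trans p a p' → ∃ q', T.trans q a q' ∧ R p' q') ∧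
    (T.conv p → T.conv q ∧
      ∀ a q', T.trans q a q' → ∃ p', T.trans p a p' ∧ R p' q')

/-- The bisimulation preorder `≲^B`. -/
def Bisim (T : LTS Proc Act) (p q : Proc) : Prop :=
  ∃ R, T.Prebisim R ∧ R p q

/-- The prebisimulation operator. -/
def Fop (T : LTS Proc Act) (R : Proc → Proc → Prop) : Proc → Proc → Prop :=
  fun p q =>
    (∀ a p', T.trans p a p' → ∃ q', T.trans q a q' ∧ R p' q') ∧
    (T.conv p → T.conv q ∧
      ∀ a q', T.trans q a q' → ∃ p', T.trans p a p' ∧ R p' q')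

/-- The ordinal approximants `≲_λ`. -/
noncomputable def approx (T : LTS Proc Act) (α : Ordinal.{u}) : Proc → Proc → Prop :=
  Ordinal.limitRecOn α (fun _ _ => True) (fun _ R => T.Fop R)
    (fun o _ IH p q => ∀ β (h : β < o), IH β h p q)

end LTS

/-- (Possibly infinitary) synchronisation trees `Σ_{i∈I} a_i t_i [+ Ω]` over `Act`;
the boolean records the optional divergence summand `Ω`. -/
inductive SyncTree (Act : Type u) : Type (u + 1)
  | node {ι : Type u} (lab : ι → Act) (child : ι → SyncTree Act) (d : Bool) : SyncTree Act

namespace SyncTree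

variable {Act : Type u}

/-- The height of a synchronisation tree. -/
noncomputable def ht : SyncTree Act → Ordinal.{u}
  | .node _ child _ => (⨆ i, (child i).ht) + 1

/-- Finite synchronisation trees (finite sums everywhere). -/
def Fin : SyncTree Act → Prop
  | .node (ι := ι) _ child _ => _root_.Finite ι ∧ ∀ i, (child i).Fin

end SyncTree

/-- The disjoint union of the synchronisation-tree transition system with a
given transition system `T`. -/
def comb {Proc : Type v} {Act : Type u} (T : LTS Proc Act) :
    LTS (SyncTree Act ⊕ Proc) Act where
  trans := fun x a y =>
    match x, y with
    | .inl (.node lab child _), .inl t => ∃ i, lab i = a ∧ child i = t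
    | .inr p, .inr q => T.trans p a q
    | _, _ => False
  div := fun x =>
    match x with
    | .inl (.node _ _ d) => d = true
    | .inr p => T.div p

section Aux

variable {Proc : Type v} {Act : Type u}

theorem approx_zero (T : LTS Proc Act) : T.approx 0 = fun _ _ => True := by
  simp [LTS.approx, Ordinal.limitRecOn_zero]

theorem approx_succ (T : LTS Proc Act) (α : Ordinal.{u}) :
    T.approx (Order.succ α) = T.Fop (T.approx α) := by
  simp [LTS.approx, Ordinal.limitRecOn_succ]

theorem approx_limit (T : LTS Proc Act) (α : Ordinal.{u}) (h : Order.IsSuccLimit α) (p q : Proc) :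
    T.approx α p q ↔ ∀ β < α, T.approx β p q := by
  show (Ordinal.limitRecOn α _ _ _ : Proc → Proc → Prop) p q ↔ _
  rw [Ordinal.limitRecOn_limit _ _ _ _ h]
  exact Iff.rfl

theorem Fop_mono (T : LTS Proc Act) {R S : Proc → Proc → Prop}
    (hRS : ∀ p q, R p q → S p q) (p q : Proc) (h : T.Fop R p q) : T.Fop S p q := by
  obtain ⟨h1, h2⟩ := h
  refine ⟨fun a p' hp' => ?_, fun hc => ?_⟩
  · obtain ⟨q', hq', hR⟩ := h1 a p' hp'
    exact ⟨q', hq', hRS _ _ hR⟩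
  · obtain ⟨hcq, h3⟩ := h2 hc
    refine ⟨hcq, fun a q' hq' => ?_⟩
    obtain ⟨p', hp', hR⟩ := h3 a q' hq'
    exact ⟨p', hp', hRS _ _ hR⟩

theorem approx_antitone (T : LTS Proc Act) :
    ∀ (α β : Ordinal.{u}), α ≤ β → ∀ p q, T.approx β p q → T.approx α p q := by
  intro α
  induction α using Ordinal.induction with
  | h α IH =>
    intro β hαβ p q hpq
    rcases eq_or_lt_of_le hαβ with rfl | hlt
    · exact hpq
    rcases Ordinal.zero_or_succ_or_isSuccLimit α with rfl | ⟨δ, rfl⟩ | hαlim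
    · rw [approx_zero]; trivial
    · -- α = δ + 1
      have hδ : δ < Order.succ δ := Order.lt_succ δ
      rcases Ordinal.zero_or_succ_or_isSuccLimit β with rfl | ⟨γ, rfl⟩ | hβlim
      · exact absurd hlt not_lt_zero
      · have hδγ : δ ≤ γ := Order.lt_succ_iff.mp (hδ.trans hlt)
        rw [approx_succ] at hpq ⊢
        exact Fop_mono T (fun p q h => IH δ hδ γ hδγ p q h) p q hpq
      · rw [approx_limit T β hβlim] at hpq
        exact hpq _ hlt
    · rw [approx_limit T α hαlim]
      intro γ hγ
      exact IH γ hγ β (le_of_lt (hγ.trans hlt)) p q hpq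

theorem bisim_le_approx (T : LTS Proc Act) (α : Ordinal.{u}) :
    ∀ p q, T.Bisim p q → T.approx α p q := by
  induction α using Ordinal.induction with
  | h α IH =>
    intro p q hpq
    rcases Ordinal.zero_or_succ_or_isSuccLimit α with rfl | ⟨δ, rfl⟩ | hαlim
    · rw [approx_zero]; trivial
    · rw [approx_succ]
      obtain ⟨R, hR, hRpq⟩ := hpq
      obtain ⟨h1, h2⟩ := hR p q hRpq
      refine ⟨fun a p' hp' => ?_, fun hc => ?_⟩
      · obtain ⟨q', hq', hR'⟩ := h1 a p' hp'
        exact ⟨q', hq', IH δ (Order.lt_succ δ) p' q' ⟨R, hR, hR'⟩⟩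
      · obtain ⟨hcq, h3⟩ := h2 hc
        refine ⟨hcq, fun a q' hq' => ?_⟩
        obtain ⟨p', hp', hR'⟩ := h3 a q' hq'
        exact ⟨p', hp', IH δ (Order.lt_succ δ) p' q' ⟨R, hR, hR'⟩⟩
    · rw [approx_limit T α hαlim]
      exact fun β hβ => IH β hβ p q hpq

theorem fin_ht_lt_omega0 : ∀ t : SyncTree Act, t.Fin → t.ht < Ordinal.omega0 := by
  intro t
  induction t with
  | node lab child d IH =>
    intro ⟨hfin, hch⟩
    rw [SyncTree.ht]
    have hsup : (⨆ i, (child i).ht) < Ordinal.omega0 := by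
      apply Ordinal.iSup_lt_ord (a := Ordinal.omega0)
      · rw [Ordinal.cof_omega0]
        exact Cardinal.lt_aleph0_of_finite _
      · exact fun i => IH i (hch i)
    rw [Ordinal.add_one_eq_succ]
    exact Ordinal.isSuccLimit_omega0.succ_lt hsup

theorem approx_ht_bisim (T : LTS Proc Act) :
    ∀ (t : SyncTree Act) (p : Proc),
      (comb T).approx t.ht (.inl t) (.inr p) → (comb T).Bisim (.inl t) (.inr p) := by
  intro t p hap
  refine ⟨fun x y => ∃ t' p', x = Sum.inl t' ∧ y = Sum.inr p' ∧
      (comb T).approx t'.ht x y, ?_, t, p, rfl, rfl, hap⟩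
  rintro x y ⟨t', p', rfl, rfl, h⟩
  obtain ⟨lab, child, d⟩ := t'
  rw [SyncTree.ht, Ordinal.add_one_eq_succ, approx_succ] at h
  obtain ⟨h1, h2⟩ := h
  have hle : ∀ i, (child i).ht ≤ ⨆ i, (child i).ht := fun i => Ordinal.le_iSup _ i
  constructor
  · rintro a x' htr
    match x', htr with
    | Sum.inl t'', ⟨i, hlab, hchild⟩ =>
      obtain ⟨q', hq', happ⟩ := h1 a (Sum.inl (child i)) ⟨i, hlab, hchild ▸ rfl⟩
      match q', hq', happ with
      | Sum.inr p'', hq', happ =>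
        subst hchild
        exact ⟨Sum.inr p'', hq', child i, p'', rfl, rfl,
          approx_antitone _ _ _ (hle i) _ _ happ⟩
  · intro hc
    obtain ⟨hcq, h3⟩ := h2 hc
    refine ⟨hcq, ?_⟩
    rintro a y' htr
    match y', htr with
    | Sum.inr q'', htr =>
      obtain ⟨x', hx', happ⟩ := h3 a (Sum.inr q'') htr
      match x', hx', happ with
      | Sum.inl t'', ⟨i, hlab, hchild⟩, happ =>
        subst hchild
        exact ⟨Sum.inl (child i), ⟨i, hlab, rfl⟩, child i, q'', rfl, rfl,
          approx_antitone _ _ _ (hle i) _ _ happ⟩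

end Aux

/-- If `T` is a synchronisation tree of height `< λ`, then `T ≲^B p` iff
`T ≲_λ p`; in particular, for every finite synchronisation tree `t` and any
process `p` of any transition system, `t ≲^B p` iff `t ≲_ω p`. -/
theorem tree_bisim_iff_approx {Proc : Type v} {Act : Type u} (T : LTS Proc Act) :
    (∀ (t : SyncTree Act) (p : Proc) (lam : Ordinal.{u}), t.ht < lam →
      ((comb T).Bisim (.inl t) (.inr p) ↔ (comb T).approx lam (.inl t) (.inr p))) ∧
    (∀ (t : SyncTree Act) (p : Proc), t.Fin →
      ((comb T).Bisim (.inl t) (.inr p) ↔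
        (comb T).approx Ordinal.omega0 (.inl t) (.inr p))) := by
  constructor
  · intro t p lam hlam
    exact ⟨fun h => bisim_le_approx _ lam _ _ h,
      fun h => approx_ht_bisim T t p (approx_antitone _ _ _ hlam.le _ _ h)⟩
  · intro t p hfin
    exact ⟨fun h => bisim_le_approx _ _ _ _ h,
      fun h => approx_ht_bisim T t p
        (approx_antitone _ _ _ (fin_ht_lt_omega0 t hfin).le _ _ h)⟩
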